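/- (The curl dynamics of the frustrated model is autonomous.) Let A be a real n × p matrix and B a real q × n matrix with B·A = 0, and in Euclidean ℝⁿ let P_c be the orthogonal projection onto the range of x ↦ Bᵀ·x. Fix α₁ ∈ ℝⁿ and α₂ ∈ ℝ^{2q}, and define the frustrated simplicial Kuramoto vector field K(θ) := −α₁ − A·sin(Aᵀ·θ) − (Bᵀ·V_qᵀ)⁻ · sin(V_q·B·θ + α₂). Then for every θ ∈ ℝⁿ, P_c(K(θ)) = −P_c(α₁) − P_c( (Bᵀ·V_qᵀ)⁻ · sin(V_q·B·(P_c θ) + α₂) ); in particular P_c(K(θ)) depends on θ only through its curl projection P_c θ. -/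

import Mathlib

open Matrix

/-- Entrywise negative part of a real matrix: `(X⁻)_{ij} = (X_{ij} − |X_{ij}|)/2`. -/
noncomputable def negPart {m n : Type*} (X : Matrix m n ℝ) : Matrix m n ℝ :=
  fun i j => (X i j - |X i j|) / 2

/-- The lift matrix `V_q`: the identity `I_q` stacked on top of `−I_q`. -/
def liftMat (q : ℕ) : Matrix (Fin q ⊕ Fin q) (Fin q) ℝ :=
  Matrix.fromRows 1 (-1)

/-- The curl projection of the frustrated simplicial Kuramoto vector field is autonomous:
it depends on the phase only through its curl projection. -/
theorem curl_dynamics_autonomous (n p q : ℕ)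
    (A : Matrix (Fin n) (Fin p) ℝ) (B : Matrix (Fin q) (Fin n) ℝ)
    (hBA : B * A = 0)
    (C : Submodule ℝ (EuclideanSpace ℝ (Fin n)))
    (hC : ∀ x : EuclideanSpace ℝ (Fin n), x ∈ C ↔ ∃ z : Fin q → ℝ, Bᵀ *ᵥ z = x)
    (α₁ : Fin n → ℝ) (α₂ : Fin q ⊕ Fin q → ℝ) :
    let K : (Fin n → ℝ) → (Fin n → ℝ) := fun θ =>
      -α₁ - (A *ᵥ fun i => Real.sin ((Aᵀ *ᵥ θ) i)) -
        negPart (Bᵀ * (liftMat q)ᵀ) *ᵥ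
          (fun i => Real.sin ((liftMat q *ᵥ (B *ᵥ θ) + α₂) i))
    ∀ θ : EuclideanSpace ℝ (Fin n),
      (Submodule.orthogonalProjectionOnto C (WithLp.toLp 2 (K θ)) : EuclideanSpace ℝ (Fin n)) =
        -(Submodule.orthogonalProjectionOnto C (WithLp.toLp 2 α₁) : EuclideanSpace ℝ (Fin n)) -
          (Submodule.orthogonalProjectionOnto C (WithLp.toLp 2
            (negPart (Bᵀ * (liftMat q)ᵀ) *ᵥ
              (fun i => Real.sin ((liftMat q *ᵥ
                (B *ᵥ (Submodule.orthogonalProjectionOnto C θ : EuclideanSpace ℝ (Fin n))) + α₂) i)))) :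
            EuclideanSpace ℝ (Fin n)) := by
  intro K θ
  -- x ∈ Cᗮ implies B *ᵥ x = 0
  have hker : ∀ x : EuclideanSpace ℝ (Fin n), x ∈ Cᗮ → B *ᵥ x.ofLp = 0 := by
    intro x hx
    funext j
    have hmem : (WithLp.toLp 2 (Bᵀ *ᵥ Pi.single j 1) : EuclideanSpace ℝ (Fin n)) ∈ C :=
      (hC _).2 ⟨Pi.single j 1, rfl⟩
    have h0 := hx _ hmem
    have : ∑ i, (Bᵀ *ᵥ Pi.single j 1) i * x i = 0 := by
      simpa [PiLp.inner_apply, RCLike.inner_apply, conj_trivial, mul_comm] using h0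
    have heq : ∀ i, (Bᵀ *ᵥ Pi.single j 1) i = B j i := by
      intro i
      simp [Matrix.mulVec, dotProduct, Pi.single_apply]
    simp only [heq] at this
    simpa [Matrix.mulVec, dotProduct] using this
  -- A-term projects to zero
  have hA0 : ∀ v : Fin p → ℝ,
      Submodule.orthogonalProjectionOnto C (WithLp.toLp 2 (A *ᵥ v) : EuclideanSpace ℝ (Fin n)) = 0 := by
    intro v
    apply Submodule.orthogonalProjectionOnto_apply_of_mem_orthogonal
    rw [Submodule.mem_orthogonal]
    intro u hu
    obtain ⟨z, hz⟩ := (hC u).1 hu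
    have : (inner ℝ u (WithLp.toLp 2 (A *ᵥ v) : EuclideanSpace ℝ (Fin n)) : ℝ) = ∑ i, u i * (A *ᵥ v) i := by
      simp [PiLp.inner_apply, RCLike.inner_apply, conj_trivial, mul_comm]
    rw [this, ← hz]
    have : ∑ i, (Bᵀ *ᵥ z) i * (A *ᵥ v) i = (Bᵀ *ᵥ z) ⬝ᵥ (A *ᵥ v) := rfl
    rw [this, dotProduct_mulVec, Matrix.mulVec_transpose, Matrix.vecMul_vecMul, hBA]
    simp
  -- B θ = B (P θ)
  have hBθ : B *ᵥ θ.ofLp = B *ᵥ (Submodule.orthogonalProjectionOnto C θ : EuclideanSpace ℝ (Fin n)).ofLp := by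
    have h := hker _ (Submodule.sub_starProjection_mem_orthogonal (K := C) θ)
    have := Matrix.mulVec_sub B θ.ofLp (Submodule.orthogonalProjectionOnto C θ : EuclideanSpace ℝ (Fin n)).ofLp
    rw [show (θ - C.starProjection θ).ofLp = θ.ofLp - (Submodule.orthogonalProjectionOnto C θ : EuclideanSpace ℝ (Fin n)).ofLp from rfl] at h
    have h2 : B *ᵥ θ.ofLp - B *ᵥ (Submodule.orthogonalProjectionOnto C θ : EuclideanSpace ℝ (Fin n)).ofLp = 0 := by
      rw [← Matrix.mulVec_sub]; exact h
    linear_combination (norm := module) h2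
  -- assemble
  show (Submodule.orthogonalProjectionOnto C (WithLp.toLp 2
      (-α₁ - (A *ᵥ fun i => Real.sin ((Aᵀ *ᵥ θ.ofLp) i)) -
        negPart (Bᵀ * (liftMat q)ᵀ) *ᵥ
          (fun i => Real.sin ((liftMat q *ᵥ (B *ᵥ θ.ofLp) + α₂) i))) : EuclideanSpace ℝ (Fin n)) :
      EuclideanSpace ℝ (Fin n)) = _
  rw [hBθ]
  rw [WithLp.toLp_sub, WithLp.toLp_sub, WithLp.toLp_neg, map_sub, map_sub, map_neg, hA0]
  push_cast
  abel
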